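/- Let I ⊆ ℝ be an open interval, let f₁, …, f_m : I → ℝ be differentiable functions, let t₀ ∈ I, and define g(t) = max{f₁(t), …, f_m(t)} for t ∈ I. Let S = {i : f_i(t₀) = g(t₀)} be the active index set at t₀. Then g has derivative max{f_i′(t₀) : i ∈ S} at t₀ within the set [t₀, ∞), and g has derivative min{f_i′(t₀) : i ∈ S} at t₀ within the set (−∞, t₀]. -/

import Mathlib

open Filter Asymptotics Set

lemma hasDerivWithinAt_sup'_aux {ι : Type*} (S : Finset ι) (hS : S.Nonempty)
    (f : ι → ℝ → ℝ) (d : ι → ℝ) (t₀ c D : ℝ) (s : Set ℝ)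
    (hd : ∀ i ∈ S, HasDerivAt (f i) (d i) t₀)
    (hc : ∀ i ∈ S, f i t₀ = c)
    (g : ℝ → ℝ) (hg0 : g t₀ = c)
    (hg : ∀ᶠ t in nhds t₀, g t = S.sup' hS fun i => f i t)
    (hDmem : ∃ i ∈ S, d i = D)
    (hDb : ∀ t ∈ s, ∀ i ∈ S, (t - t₀) * d i ≤ (t - t₀) * D) :
    HasDerivWithinAt g D s t₀ := by
  rw [hasDerivWithinAt_iff_isLittleO]
  set E : ℝ → ℝ := fun t => ∑ i ∈ S, ‖f i t - f i t₀ - (t - t₀) * d i‖ with hE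
  have hEo : E =o[nhdsWithin t₀ s] fun t => t - t₀ := by
    refine (Asymptotics.IsLittleO.sum (s := S) (A := fun i t => ‖f i t - f i t₀ - (t - t₀) * d i‖) ?_).congr_left
      (fun t => by simp [hE, Finset.sum_apply])
    intro i hi
    have := (hasDerivAt_iff_isLittleO.mp (hd i hi)).norm_left
    simpa [smul_eq_mul] using this.mono nhdsWithin_le_nhds
  have hbound : ∀ᶠ t in nhdsWithin t₀ s,
      ‖g t - g t₀ - (t - t₀) • D‖ ≤ 1 * ‖E t‖ := by
    filter_upwards [hg.filter_mono nhdsWithin_le_nhds, self_mem_nhdsWithin] with t hgt hts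
    have hEnn : 0 ≤ E t := Finset.sum_nonneg fun i _ => norm_nonneg _
    rw [one_mul, Real.norm_eq_abs, Real.norm_eq_abs, abs_of_nonneg hEnn]
    have hterm : ∀ i ∈ S, f i t - c - (t - t₀) * d i ≤ E t ∧
        -(E t) ≤ f i t - c - (t - t₀) * d i := by
      intro i hi
      have h1 : ‖f i t - f i t₀ - (t - t₀) * d i‖ ≤ E t :=
        Finset.single_le_sum (f := fun j => ‖f j t - f j t₀ - (t - t₀) * d j‖) (fun j _ => norm_nonneg _) hi
      rw [Real.norm_eq_abs, hc i hi] at h1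
      exact ⟨le_trans (le_abs_self _) h1, neg_le_of_abs_le h1⟩
    rw [abs_le]
    obtain ⟨j, hj, hjeq⟩ := S.exists_mem_eq_sup' hS (fun i => f i t)
    obtain ⟨i₀, hi₀, hi₀eq⟩ := hDmem
    constructor
    · -- lower bound: g t ≥ f i₀ t
      have h2 : f i₀ t ≤ g t := by rw [hgt]; exact Finset.le_sup' (f := fun i => f i t) hi₀
      have := (hterm i₀ hi₀).2
      rw [hi₀eq] at this
      simp only [smul_eq_mul, hg0]
      linarith
    · -- upper bound: g t = f j t
      have h2 : g t = f j t := by rw [hgt, hjeq]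
      have h3 := (hterm j hj).1
      have h4 := hDb t hts j hj
      simp only [smul_eq_mul, hg0, h2]
      linarith
  exact (Asymptotics.IsBigO.of_bound 1 hbound).trans_isLittleO hEo


/-- One-sided differentiation rule for a pointwise maximum of finitely many
differentiable branches on an open interval: only the branches attaining the maximum
at `t₀` contribute. The right derivative at `t₀` is the maximum of the derivatives of
the active branches, and the left derivative is their minimum. -/
theorem hasDerivWithinAt_max_active
    (α β : ℝ) (m : ℕ) [NeZero m] (f : Fin m → ℝ → ℝ)
    (hdiff : ∀ i, ∀ t ∈ Set.Ioo α β, DifferentiableAt ℝ (f i) t)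
    (t₀ : ℝ) (ht₀ : t₀ ∈ Set.Ioo α β)
    (g : ℝ → ℝ)
    (hg : ∀ t ∈ Set.Ioo α β,
      g t = Finset.univ.sup' Finset.univ_nonempty fun i => f i t) :
    HasDerivWithinAt g
        (sSup {d : ℝ | ∃ i, f i t₀ = g t₀ ∧ d = deriv (f i) t₀})
        (Set.Ici t₀) t₀ ∧
    HasDerivWithinAt g
        (sInf {d : ℝ | ∃ i, f i t₀ = g t₀ ∧ d = deriv (f i) t₀})
        (Set.Iic t₀) t₀ := by
  classical
  set S : Finset (Fin m) := Finset.univ.filter (fun i => f i t₀ = g t₀) with hSdef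
  have hmemS : ∀ i, i ∈ S ↔ f i t₀ = g t₀ := fun i => by simp [hSdef]
  have hgt₀ := hg t₀ ht₀
  obtain ⟨j₀, -, hj₀⟩ := Finset.univ.exists_mem_eq_sup' Finset.univ_nonempty (fun i => f i t₀)
  have hS : S.Nonempty := ⟨j₀, (hmemS j₀).mpr (by rw [hgt₀, hj₀])⟩
  have hcont : ∀ i, ContinuousAt (f i) t₀ := fun i => (hdiff i t₀ ht₀).continuousAt
  have hhcont : ContinuousAt (fun t => S.sup' hS fun i => f i t) t₀ :=
    ContinuousAt.finset_sup'_apply hS fun i _ => hcont i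
  have hht₀ : (S.sup' hS fun i => f i t₀) = g t₀ := by
    apply le_antisymm
    · exact Finset.sup'_le _ _ fun i hi => le_of_eq ((hmemS i).mp hi)
    · obtain ⟨i, hi⟩ := hS
      exact le_trans (le_of_eq ((hmemS i).mp hi).symm) (Finset.le_sup' (f := fun j => f j t₀) hi)
  -- eventually, g agrees with the sup over the active set
  have hev : ∀ᶠ t in nhds t₀, g t = S.sup' hS fun i => f i t := by
    have hlt : ∀ᶠ t in nhds t₀, ∀ i, i ∉ S → f i t < S.sup' hS fun j => f j t := by
      rw [Filter.eventually_all]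
      intro i
      by_cases hi : i ∈ S
      · exact Filter.Eventually.of_forall fun t h => absurd hi h
      · have h1 : f i t₀ < S.sup' hS fun j => f j t₀ := by
          rw [hht₀]
          refine lt_of_le_of_ne ?_ fun h => hi ((hmemS i).mpr h)
          rw [hgt₀]
          exact Finset.le_sup' (f := fun j => f j t₀) (Finset.mem_univ i)
        filter_upwards [(hcont i).eventually_lt hhcont h1] with t ht _ using ht
    filter_upwards [hlt, isOpen_Ioo.eventually_mem ht₀] with t hlt' htI
    rw [hg t htI]
    apply le_antisymm
    · apply Finset.sup'_le
      intro i _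
      by_cases hi : i ∈ S
      · exact Finset.le_sup' (f := fun j => f j t) hi
      · exact (hlt' i hi).le
    · exact Finset.sup'_le _ _ fun i _ =>
        Finset.le_sup' (f := fun j => f j t) (Finset.mem_univ i)
  -- identify the sSup / sInf with finite sup'/inf'
  have hset : {d : ℝ | ∃ i, f i t₀ = g t₀ ∧ d = deriv (f i) t₀}
      = (fun i => deriv (f i) t₀) '' ↑S := by
    ext d
    simp only [Set.mem_setOf_eq, Set.mem_image, Finset.mem_coe, hmemS]
    exact ⟨fun ⟨i, h1, h2⟩ => ⟨i, h1, h2.symm⟩, fun ⟨i, h1, h2⟩ => ⟨i, h1, h2.symm⟩⟩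
  have hsup : sSup {d : ℝ | ∃ i, f i t₀ = g t₀ ∧ d = deriv (f i) t₀}
      = S.sup' hS fun i => deriv (f i) t₀ := by
    rw [hset, ← Finset.sup'_eq_csSup_image]
  have hinf : sInf {d : ℝ | ∃ i, f i t₀ = g t₀ ∧ d = deriv (f i) t₀}
      = S.inf' hS fun i => deriv (f i) t₀ := by
    rw [hset, ← Finset.inf'_eq_csInf_image]
  rw [hsup, hinf]
  have hd : ∀ i ∈ S, HasDerivAt (f i) (deriv (f i) t₀) t₀ :=
    fun i _ => (hdiff i t₀ ht₀).hasDerivAt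
  have hc : ∀ i ∈ S, f i t₀ = g t₀ := fun i hi => (hmemS i).mp hi
  constructor
  · obtain ⟨i₁, hi₁, hi₁eq⟩ := S.exists_mem_eq_sup' hS fun i => deriv (f i) t₀
    refine hasDerivWithinAt_sup'_aux S hS f _ t₀ (g t₀) _ _ hd hc g rfl hev
      ⟨i₁, hi₁, hi₁eq.symm⟩ ?_
    intro t ht i hi
    exact mul_le_mul_of_nonneg_left (Finset.le_sup' (f := fun j => deriv (f j) t₀) hi)
      (sub_nonneg.mpr ht)
  · obtain ⟨i₁, hi₁, hi₁eq⟩ := S.exists_mem_eq_inf' hS fun i => deriv (f i) t₀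
    refine hasDerivWithinAt_sup'_aux S hS f _ t₀ (g t₀) _ _ hd hc g rfl hev
      ⟨i₁, hi₁, hi₁eq.symm⟩ ?_
    intro t ht i hi
    exact mul_le_mul_of_nonpos_left (Finset.inf'_le (f := fun j => deriv (f j) t₀) hi)
      (sub_nonpos.mpr ht)
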